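/- (Johnson) Let g ≥ 3. The group Sp^{(2)}(2g), the kernel of the reduction homomorphism Sp(2g, ℤ) → Sp(2g, ℤ/2), is generated by the square transvections T_a^2 where a ranges over all primitive elements of L = ℤ^{2g}. -/

import Mathlib

namespace Paper

/-- `L g = ℤ^{2g}`, with basis indexed by `Fin g × Bool`:
`(i, false)` corresponds to `x_i` and `(i, true)` to `y_i`. -/
abbrev L (g : ℕ) := (Fin g × Bool) → ℤ

/-- The standard symplectic form on `ℤ^{2g}`. -/
def omg {g : ℕ} (a b : L g) : ℤ :=
  ∑ i : Fin g, (a (i, false) * b (i, true) - a (i, true) * b (i, false))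

lemma omg_add_right {g : ℕ} (a v w : L g) : omg a (v + w) = omg a v + omg a w := by
  simp only [omg, Pi.add_apply]
  rw [← Finset.sum_add_distrib]
  exact Finset.sum_congr rfl fun i _ => by ring

lemma omg_sub_right {g : ℕ} (a v w : L g) : omg a (v - w) = omg a v - omg a w := by
  simp only [omg, Pi.sub_apply]
  rw [← Finset.sum_sub_distrib]
  exact Finset.sum_congr rfl fun i _ => by ring

lemma omg_smul_right {g : ℕ} (a : L g) (c : ℤ) (v : L g) : omg a (c • v) = c * omg a v := by
  simp only [omg, Pi.smul_apply, smul_eq_mul]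
  rw [Finset.mul_sum]
  exact Finset.sum_congr rfl fun i _ => by ring

lemma omg_self {g : ℕ} (a : L g) : omg a a = 0 :=
  Finset.sum_eq_zero fun i _ => by ring

/-- A vector of `ℤ^{2g}` is primitive if it is not a nontrivial integer multiple. -/
def Primitive {g : ℕ} (a : L g) : Prop :=
  ¬ ∃ (n : ℤ) (b : L g), n ≠ 0 ∧ n ≠ 1 ∧ n ≠ -1 ∧ a = n • b

/-- The transvection `T_a : v ↦ v + (a,v)·a`, as a linear automorphism of `ℤ^{2g}`. -/
def T {g : ℕ} (a : L g) : L g ≃ₗ[ℤ] L g where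
  toFun v := v + omg a v • a
  invFun v := v - omg a v • a
  map_add' v w := by
    show (v + w) + omg a (v + w) • a = (v + omg a v • a) + (w + omg a w • a)
    rw [omg_add_right, add_smul]; abel
  map_smul' c v := by
    show (c • v) + omg a (c • v) • a = c • (v + omg a v • a)
    rw [omg_smul_right, mul_smul, smul_add]
  left_inv v := by
    show v + omg a v • a - omg a (v + omg a v • a) • a = v
    rw [omg_add_right, omg_smul_right, omg_self, mul_zero, add_zero]
    abel
  right_inv v := by
    show v - omg a v • a + omg a (v - omg a v • a) • a = v
    rw [omg_sub_right, omg_smul_right, omg_self, mul_zero, sub_zero]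
    abel

/-- `Sp(2g, ℤ)`: the group of linear automorphisms of `ℤ^{2g}` preserving
the symplectic form. -/
def Sp (g : ℕ) : Subgroup (L g ≃ₗ[ℤ] L g) where
  carrier := {φ | ∀ v w : L g, omg (φ v) (φ w) = omg v w}
  one_mem' := fun v w => rfl
  mul_mem' := by
    intro φ ψ hφ hψ v w
    exact (hφ (ψ v) (ψ w)).trans (hψ v w)
  inv_mem' := by
    intro φ hφ v w
    have h := hφ (φ⁻¹ v) (φ⁻¹ w)
    have h1 : φ (φ⁻¹ v) = v := φ.apply_symm_apply v
    have h2 : φ (φ⁻¹ w) = w := φ.apply_symm_apply w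
    rw [h1, h2] at h
    exact h.symm

/-- Reduction modulo 2, as a monoid homomorphism from the linear automorphism
group of `ℤ^{2g}` to matrices over `ℤ/2`. -/
def redHom (g : ℕ) :
    (L g ≃ₗ[ℤ] L g) →* Matrix (Fin g × Bool) (Fin g × Bool) (ZMod 2) where
  toFun φ := (LinearMap.toMatrix' (φ : L g →ₗ[ℤ] L g)).map (Int.castRingHom (ZMod 2))
  map_one' := by
    show (LinearMap.toMatrix' ((1 : L g ≃ₗ[ℤ] L g) : L g →ₗ[ℤ] L g)).map
      (Int.castRingHom (ZMod 2)) = 1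
    rw [LinearEquiv.coe_toLinearMap_one, LinearMap.toMatrix'_id,
      Matrix.map_one _ (map_zero _) (map_one _)]
  map_mul' φ ψ := by
    show (LinearMap.toMatrix' ((φ * ψ : L g ≃ₗ[ℤ] L g) : L g →ₗ[ℤ] L g)).map
        (Int.castRingHom (ZMod 2)) =
      (LinearMap.toMatrix' (φ : L g →ₗ[ℤ] L g)).map (Int.castRingHom (ZMod 2)) *
      (LinearMap.toMatrix' (ψ : L g →ₗ[ℤ] L g)).map (Int.castRingHom (ZMod 2))
    rw [LinearEquiv.coe_toLinearMap_mul, LinearMap.toMatrix'_mul, Matrix.map_mul]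

/-- `Sp^{(2)}(2g)`: the kernel of the reduction homomorphism
`Sp(2g, ℤ) → Sp(2g, ℤ/2)`, i.e. the symplectic automorphisms reducing to
the identity modulo 2. -/
def SpTwo (g : ℕ) : Subgroup (L g ≃ₗ[ℤ] L g) := Sp g ⊓ (redHom g).ker

-- ===================== new material =====================

lemma omg_anti {g : ℕ} (a b : L g) : omg a b = - omg b a := by
  simp only [omg, ← Finset.sum_neg_distrib]
  exact Finset.sum_congr rfl fun i _ => by ring

lemma omg_add_left {g : ℕ} (a b v : L g) : omg (a + b) v = omg a v + omg b v := by
  simp only [omg, Pi.add_apply]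
  rw [← Finset.sum_add_distrib]
  exact Finset.sum_congr rfl fun i _ => by ring

/-- basis vectors -/
def e {g : ℕ} (p : Fin g × Bool) : L g := fun q => if q = p then 1 else 0

@[simp] lemma e_apply_same {g : ℕ} (p : Fin g × Bool) : e p p = 1 := by simp [e]

lemma e_apply_ne {g : ℕ} {p q : Fin g × Bool} (h : q ≠ p) : e p q = 0 := by simp [e, h]

lemma omg_e_false {g : ℕ} (j : Fin g) (v : L g) : omg (e (j, false)) v = v (j, true) := by
  rw [omg, Finset.sum_eq_single j]
  · simp [e]
  · intro i _ hij
    have h1 : ((i, false) : Fin g × Bool) ≠ (j, false) := by simp [hij]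
    have h2 : ((i, true) : Fin g × Bool) ≠ (j, false) := by simp
    simp [e_apply_ne h1, e_apply_ne h2]
  · simp

lemma omg_e_true {g : ℕ} (j : Fin g) (v : L g) : omg (e (j, true)) v = - v (j, false) := by
  rw [omg, Finset.sum_eq_single j]
  · simp [e]
  · intro i _ hij
    have h1 : ((i, false) : Fin g × Bool) ≠ (j, true) := by simp
    have h2 : ((i, true) : Fin g × Bool) ≠ (j, true) := by simp [hij]
    simp [e_apply_ne h1, e_apply_ne h2]
  · simp

lemma omg_e {g : ℕ} (j : Fin g) (ε : Bool) (v : L g) :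
    omg (e (j, ε)) v = if ε then - v (j, false) else v (j, true) := by
  cases ε
  · simpa using omg_e_false j v
  · simpa using omg_e_true j v

/-- primitivity of vectors having a coordinate equal to ±1 -/
lemma primitive_of_coord_one {g : ℕ} (a : L g) (p : Fin g × Bool) (h : a p = 1 ∨ a p = -1) :
    Primitive a := by
  rintro ⟨n, b, hn0, hn1, hn1', rfl⟩
  have : n * b p = 1 ∨ n * b p = -1 := h
  have hu : IsUnit n := by
    rcases this with h' | h'
    · exact IsUnit.of_mul_eq_one _ h'
    · exact IsUnit.of_mul_eq_one (- b p) (by rw [mul_neg]; omega)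
  rcases Int.isUnit_iff.mp hu with rfl | rfl
  · exact hn1 rfl
  · exact hn1' rfl

lemma primitive_e {g : ℕ} (p : Fin g × Bool) : Primitive (e p) :=
  primitive_of_coord_one _ p (Or.inl (by simp))

lemma primitive_e_add_e {g : ℕ} {p q : Fin g × Bool} (h : p ≠ q) : Primitive (e p + e q) :=
  primitive_of_coord_one _ p (Or.inl (by
    have : e q p = 0 := e_apply_ne h
    simp [Pi.add_apply, this]))

/-- primitivity is preserved by linear automorphisms -/
lemma primitive_map {g : ℕ} (φ : L g ≃ₗ[ℤ] L g) {a : L g} (h : Primitive a) :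
    Primitive (φ a) := by
  rintro ⟨n, b, hn0, hn1, hn1', hab⟩
  exact h ⟨n, φ.symm b, hn0, hn1, hn1', by
    have := congrArg φ.symm hab
    rwa [φ.symm_apply_apply, map_smul] at this⟩

lemma primitive_unit_of_dvd {g : ℕ} {v : L g} (hv : Primitive v) {d : ℤ}
    (hd0 : d ≠ 0) (hdvd : ∀ q, d ∣ v q) : d = 1 ∨ d = -1 := by
  by_contra hcon
  push_neg at hcon
  exact hv ⟨d, fun q => v q / d, hd0, hcon.1, hcon.2, by
    funext q
    simp only [Pi.smul_apply, smul_eq_mul]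
    exact (Int.mul_ediv_cancel' (hdvd q)).symm⟩

-- T basics
lemma T_apply {g : ℕ} (a v : L g) : T a v = v + omg a v • a := rfl

lemma T_pow_apply {g : ℕ} (a : L g) (n : ℕ) (v : L g) : (T a ^ n) v = v + (n * omg a v) • a := by
  induction n generalizing v with
  | zero => simp
  | succ n ih =>
    have h1 : (T a ^ (n + 1)) v = (T a ^ n) (T a v) := by
      rw [pow_succ]; rfl
    rw [h1, T_apply, ih (v + omg a v • a), omg_add_right, omg_smul_right, omg_self, mul_zero,
      add_zero]
    push_cast
    rw [add_mul, one_mul, add_smul]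
    abel

lemma T_zpow_apply {g : ℕ} (a v : L g) (n : ℤ) : (T a ^ n) v = v + (n * omg a v) • a := by
  rcases n with n | n
  · rw [Int.ofNat_eq_coe, zpow_natCast, T_pow_apply]
  · rw [zpow_negSucc]
    have key : (T a ^ (n + 1)) (v + ((Int.negSucc n) * omg a v) • a) = v := by
      rw [T_pow_apply, omg_add_right, omg_smul_right, omg_self, mul_zero, add_zero]
      rw [Int.negSucc_eq]
      push_cast
      rw [add_assoc, ← add_smul]
      have : (-(↑n + 1) * omg a v + (↑n + 1) * omg a v : ℤ) = 0 := by ring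
      rw [this, zero_smul, add_zero]
    calc (T a ^ (n + 1))⁻¹ v = (T a ^ (n + 1))⁻¹ ((T a ^ (n + 1)) (v + ((Int.negSucc n) * omg a v) • a)) := by rw [key]
    _ = v + ((Int.negSucc n) * omg a v) • a := by
        show (T a ^ (n+1)).symm ((T a ^ (n+1)) _) = _
        rw [LinearEquiv.symm_apply_apply]

lemma T_sq_apply {g : ℕ} (a v : L g) : (T a ^ 2) v = v + (2 * omg a v) • a := by
  have := T_pow_apply a 2 v
  norm_num at this
  exact this


lemma omg_smul_left {g : ℕ} (c : ℤ) (a v : L g) : omg (c • a) v = c * omg a v := by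
  simp only [omg, Pi.smul_apply, smul_eq_mul]
  rw [Finset.mul_sum]
  exact Finset.sum_congr rfl fun i _ => by ring

lemma T_mem_Sp {g : ℕ} (a : L g) : T a ∈ Sp g := by
  intro v w
  show omg (v + omg a v • a) (w + omg a w • a) = omg v w
  simp only [omg_add_left, omg_add_right, omg_smul_left, omg_smul_right, omg_self]
  rw [omg_anti v a]
  ring

lemma redHom_apply_e {g : ℕ} (φ : L g ≃ₗ[ℤ] L g) (p q : Fin g × Bool) :
    redHom g φ p q = ((φ (e q) p : ℤ) : ZMod 2) := by
  show ((LinearMap.toMatrix' (φ : L g →ₗ[ℤ] L g)).map (Int.castRingHom (ZMod 2))) p q = _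
  rw [Matrix.map_apply, LinearMap.toMatrix'_apply]
  have he : e q = Pi.single q 1 := by funext r; rw [Pi.single_apply]; rfl
  rw [he]
  rfl

lemma Tsq_mem_ker {g : ℕ} (a : L g) : T a ^ 2 ∈ (redHom g).ker := by
  rw [MonoidHom.mem_ker]
  ext p q
  rw [redHom_apply_e, T_sq_apply]
  simp only [Pi.add_apply, Pi.smul_apply, smul_eq_mul]
  push_cast
  have h2 : (2 : ZMod 2) = 0 := rfl
  rw [h2, zero_mul, zero_mul, add_zero, Matrix.one_apply]
  by_cases h : p = q
  · subst h; simp [e]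
  · have : e q p = 0 := e_apply_ne h
    rw [this]
    simp [h]

lemma Tsq_mem_SpTwo {g : ℕ} (a : L g) : T a ^ 2 ∈ SpTwo g :=
  ⟨pow_mem (T_mem_Sp a) 2, Tsq_mem_ker a⟩

def genSet (g : ℕ) : Set (L g ≃ₗ[ℤ] L g) := {φ | ∃ a : L g, Primitive a ∧ φ = (T a) ^ 2}

lemma closure_le_SpTwo {g : ℕ} : Subgroup.closure (genSet g) ≤ SpTwo g := by
  rw [Subgroup.closure_le]
  rintro φ ⟨a, -, rfl⟩
  exact Tsq_mem_SpTwo a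

/-- support condition: zero on all pairs with index `< k` -/
def Supp {g : ℕ} (k : ℕ) (a : L g) : Prop := ∀ p : Fin g × Bool, (p.1 : ℕ) < k → a p = 0

def Nk (g k : ℕ) : Subgroup (L g ≃ₗ[ℤ] L g) :=
  Subgroup.closure {φ | ∃ a : L g, Primitive a ∧ Supp k a ∧ φ = (T a) ^ 2}

lemma Nk_le_closure {g k : ℕ} : Nk g k ≤ Subgroup.closure (genSet g) := by
  rw [Nk, Subgroup.closure_le]
  rintro φ ⟨a, ha, -, rfl⟩
  exact Subgroup.subset_closure ⟨a, ha, rfl⟩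

lemma Nk_le_SpTwo {g k : ℕ} : Nk g k ≤ SpTwo g :=
  le_trans Nk_le_closure closure_le_SpTwo

lemma Nk_fixes {g : ℕ} {k : ℕ} {n : L g ≃ₗ[ℤ] L g} (hn : n ∈ Nk g k)
    (p : Fin g × Bool) (hp : (p.1 : ℕ) < k) : n (e p) = e p := by
  induction hn using Subgroup.closure_induction with
  | mem φ hφ =>
    obtain ⟨a, -, hs, rfl⟩ := hφ
    rw [T_sq_apply]
    have h0 : omg a (e p) = 0 := by
      rw [omg_anti]
      obtain ⟨i, ε⟩ := p
      rw [omg_e]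
      cases ε
      · simp [hs (i, true) hp]
      · simp [hs (i, false) hp]
    rw [h0]
    simp
  | one => rfl
  | mul φ ψ _ _ h1 h2 =>
    show φ (ψ (e p)) = e p
    rw [h2, h1]
  | inv φ _ h1 =>
    show φ.symm (e p) = e p
    exact φ.symm_apply_eq.mpr h1.symm

lemma Tsq_zpow_mem_Nk {g : ℕ} {k : ℕ} {a : L g} (ha : Primitive a) (hs : Supp k a) (m : ℤ) :
    T a ^ (2 * m) ∈ Nk g k := by
  have hmem : (T a) ^ (2 : ℕ) ∈ Nk g k :=
    Subgroup.subset_closure (show (T a) ^ (2 : ℕ) ∈ {φ | ∃ b : L g, Primitive b ∧ Supp k b ∧ φ = (T b) ^ 2} from ⟨a, ha, hs, rfl⟩)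
  rw [zpow_mul]
  rw [zpow_ofNat (T a) 2]
  exact Subgroup.zpow_mem _ hmem m

/-- Reachability by products of square transvections supported on pairs `≥ k`. -/
def ReachA (g k : ℕ) (v w : L g) : Prop := ∃ n ∈ Nk g k, n v = w

lemma ReachA.refl {g k : ℕ} (v : L g) : ReachA g k v v := ⟨1, one_mem _, rfl⟩

lemma ReachA.trans {g k : ℕ} {u v w : L g} (h1 : ReachA g k u v) (h2 : ReachA g k v w) :
    ReachA g k u w := by
  obtain ⟨n1, hn1, e1⟩ := h1
  obtain ⟨n2, hn2, e2⟩ := h2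
  exact ⟨n2 * n1, mul_mem hn2 hn1, by show n2 (n1 u) = w; rw [e1, e2]⟩

lemma reachA_move {g k : ℕ} (c : L g) (hc : Primitive c) (hs : Supp k c) (m : ℤ) (v : L g) :
    ReachA g k v (v + (2 * m * omg c v) • c) :=
  ⟨T c ^ (2 * m), Tsq_zpow_mem_Nk hc hs m, T_zpow_apply c v (2 * m)⟩

/-- Reachability fixing a given vector `x`. -/
def ReachB (g k : ℕ) (x v w : L g) : Prop := ∃ n ∈ Nk g k, n v = w ∧ n x = x

lemma ReachB.refl {g k : ℕ} (x v : L g) : ReachB g k x v v := ⟨1, one_mem _, rfl, rfl⟩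

lemma ReachB.trans {g k : ℕ} {x u v w : L g} (h1 : ReachB g k x u v) (h2 : ReachB g k x v w) :
    ReachB g k x u w := by
  obtain ⟨n1, hn1, e1, f1⟩ := h1
  obtain ⟨n2, hn2, e2, f2⟩ := h2
  exact ⟨n2 * n1, mul_mem hn2 hn1, by show n2 (n1 u) = w; rw [e1, e2],
    by show n2 (n1 x) = x; rw [f1, f2]⟩

lemma reachB_move {g k : ℕ} {x : L g} (c : L g) (hc : Primitive c) (hs : Supp k c)
    (hx : omg c x = 0) (m : ℤ) (v : L g) :
    ReachB g k x v (v + (2 * m * omg c v) • c) :=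
  ⟨T c ^ (2 * m), Tsq_zpow_mem_Nk hc hs m, T_zpow_apply c v (2 * m), by
    rw [T_zpow_apply, hx]; simp⟩

lemma upd_apply {g : ℕ} (v : L g) (z : ℤ) (p q : Fin g × Bool) :
    (v + z • e p) q = if q = p then v q + z else v q := by
  by_cases h : q = p
  · subst h; simp [e]
  · simp [e, h, e_apply_ne h]

lemma upd2_apply {g : ℕ} (v : L g) (z : ℤ) (p p' q : Fin g × Bool) (hpp : p ≠ p') :
    (v + z • (e p + e p')) q =
      if q = p then v q + z else if q = p' then v q + z else v q := by
  have key : v + z • (e p + e p') = (v + z • e p) + z • e p' := by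
    rw [smul_add]; abel
  rw [key, upd_apply, upd_apply]
  by_cases h : q = p
  · subst h
    rw [if_neg (fun hh => hpp (hh : q = p')), if_pos rfl, if_pos rfl]
  · by_cases h' : q = p'
    · rw [if_pos h', if_neg h, if_neg h, if_pos h']
    · rw [if_neg h', if_neg h, if_neg h, if_neg h']

lemma supp_e {g k : ℕ} {j : Fin g} (h : k ≤ (j : ℕ)) (ε : Bool) : Supp k (e (j, ε)) := by
  intro p hp
  have hne : p ≠ (j, ε) := by
    rintro rfl
    simp only at hp
    omega
  exact e_apply_ne hne

lemma supp_add {g k : ℕ} {a b : L g} (ha : Supp k a) (hb : Supp k b) : Supp k (a + b) :=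
  fun p hp => by rw [Pi.add_apply, ha p hp, hb p hp, add_zero]

lemma exists_red (x y : ℤ) (hy : y ≠ 0) (hpar : Odd (x + y)) :
    ∃ m r : ℤ, x + 2 * m * y = r ∧ r.natAbs < y.natAbs := by
  set B : ℤ := 2 * y.natAbs with hB
  have hApos : (0 : ℤ) < y.natAbs := by exact_mod_cast Int.natAbs_pos.mpr hy
  have hBpos : 0 < B := by omega
  have hdm : B * (x / B) + x % B = x := Int.mul_ediv_add_emod x B
  have h0 : 0 ≤ x % B := Int.emod_nonneg x (ne_of_gt hBpos)
  have h1 : x % B < B := Int.emod_lt_of_pos x hBpos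
  have hcase : (y.natAbs : ℤ) = y ∨ (y.natAbs : ℤ) = -y := by omega
  have hodd : (x + y) % 2 = 1 := Int.odd_iff.mp hpar
  set q := x / B with hq
  set r₀ := x % B with hr₀
  have hx2 : (x - r₀) % 2 = 0 := by
    have hh : x - r₀ = 2 * ((y.natAbs : ℤ) * q) := by rw [← hdm]; ring
    omega
  by_cases hlt : r₀ < (y.natAbs : ℤ)
  · refine ⟨if 0 ≤ y then -q else q, r₀, ?_, by omega⟩
    rcases hcase with hc | hc
    · rw [if_pos (by omega)]
      have hdm' : 2 * y * q + r₀ = x := by rw [← hc]; exact hdm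
      linarith [hdm']
    · rw [if_neg (by omega)]
      have hdm' : 2 * (-y) * q + r₀ = x := by rw [show (2 * (-y) : ℤ) = 2 * (y.natAbs : ℤ) by omega]; exact hdm
      linarith [hdm']
  · have hne : r₀ ≠ (y.natAbs : ℤ) := by
      intro hcon
      rcases hcase with hc | hc <;> omega
    refine ⟨if 0 ≤ y then -(q + 1) else q + 1, r₀ - B, ?_, by omega⟩
    rcases hcase with hc | hc
    · rw [if_pos (by omega)]
      have hdm' : 2 * y * q + r₀ = x := by rw [← hc]; exact hdm
      have hBy : B = 2 * y := by omega
      rw [hBy]; linarith [hdm']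
    · rw [if_neg (by omega)]
      have hdm' : 2 * (-y) * q + r₀ = x := by rw [show (2 * (-y) : ℤ) = 2 * (y.natAbs : ℤ) by omega]; exact hdm
      have hBy : B = -(2 * y) := by omega
      rw [hBy]; linarith [hdm']

lemma euclid {g : ℕ} (k : ℕ) (j : Fin g) (hjk : k ≤ (j : ℕ)) (b : ℕ) :
    ∀ v : L g, (v (j, true)).natAbs = b → Odd (v (j, false)) → Even (v (j, true)) →
    ∃ w : L g, ReachA g k v w ∧ w (j, true) = 0 ∧
      w (j, false) ∣ v (j, false) ∧ w (j, false) ∣ v (j, true) ∧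
      (∀ q, q ≠ (j, false) → q ≠ (j, true) → w q = v q) := by
  induction b using Nat.strong_induction_on with
  | _ b IH =>
    intro v hb hodd heven
    by_cases hz : v (j, true) = 0
    · exact ⟨v, ReachA.refl v, hz, dvd_rfl, hz ▸ dvd_zero _, fun q _ _ => rfl⟩
    · obtain ⟨m, r, hmr, hlt⟩ := exists_red (v (j, false)) (v (j, true)) hz (hodd.add_even heven)
      set v1 := v + (2 * m * omg (e (j, false)) v) • e (j, false) with hv1
      have hreach1 : ReachA g k v v1 := reachA_move _ (primitive_e _) (supp_e hjk false) m v
      have hz1 : omg (e (j, false)) v = v (j, true) := omg_e_false j v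
      have h1f : v1 (j, false) = r := by
        rw [hv1, hz1, upd_apply, if_pos rfl]; exact hmr
      have h1t : v1 (j, true) = v (j, true) := by
        rw [hv1, upd_apply, if_neg (by simp)]
      have h1o : ∀ q, q ≠ (j, false) → v1 q = v q := by
        intro q hq; rw [hv1, upd_apply, if_neg hq]
      have hrodd : Odd r := hmr ▸ hodd.add_even ⟨m * v (j, true), by ring⟩
      have hrne : r ≠ 0 := by
        have := Int.odd_iff.mp hrodd; omega
      obtain ⟨m2, r2, hmr2, hlt2⟩ := exists_red (v (j, true)) r hrne (heven.add_odd hrodd)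
      set v2 := v1 + (2 * (-m2) * omg (e (j, true)) v1) • e (j, true) with hv2
      have hz2 : omg (e (j, true)) v1 = -r := by rw [omg_e_true, h1f]
      have hreach2 : ReachA g k v1 v2 := reachA_move _ (primitive_e _) (supp_e hjk true) (-m2) v1
      have h2t : v2 (j, true) = r2 := by
        rw [hv2, hz2, upd_apply, if_pos rfl, h1t]
        linarith [hmr2]
      have h2f : v2 (j, false) = r := by
        rw [hv2, upd_apply, if_neg (by simp), h1f]
      have h2o : ∀ q, q ≠ (j, true) → v2 q = v1 q := by
        intro q hq; rw [hv2, upd_apply, if_neg hq]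
      have hlt' : r2.natAbs < b := lt_trans hlt2 (hb ▸ hlt)
      have heven2 : Even r2 := by
        rw [← hmr2]; exact heven.add ⟨m2 * r, by ring⟩
      obtain ⟨w, hrw, hwt, hd1, hd2, hwo⟩ := IH r2.natAbs hlt' v2 (by rw [h2t])
        (by rw [h2f]; exact hrodd) (by rw [h2t]; exact heven2)
      have hdr : w (j, false) ∣ r := h2f ▸ hd1
      have hdr2 : w (j, false) ∣ r2 := h2t ▸ hd2
      have hdy : w (j, false) ∣ v (j, true) := by
        have hh : v (j, true) = r2 - 2 * m2 * r := by linarith [hmr2]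
        rw [hh]; exact dvd_sub hdr2 (hdr.mul_left _)
      have hdx : w (j, false) ∣ v (j, false) := by
        have hh : v (j, false) = r - 2 * m * v (j, true) := by linarith [hmr]
        rw [hh]; exact dvd_sub hdr (hdy.mul_left _)
      exact ⟨w, hreach1.trans (hreach2.trans hrw), hwt, hdx, hdy,
        fun q hq1 hq2 => (hwo q hq1 hq2).trans ((h2o q hq2).trans (h1o q hq1))⟩

lemma odd_of_dvd {d a : ℤ} (h : d ∣ a) (ha : Odd a) : Odd d := by
  rcases Int.even_or_odd d with he | ho
  · exfalso
    obtain ⟨c, rfl⟩ := h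
    obtain ⟨t, rfl⟩ := he
    exact (Int.not_odd_iff_even.mpr ⟨t * c, by ring⟩) ha
  · exact ho

lemma dvd_of_dvd_two_mul {d x : ℤ} (hd : Odd d) (h : d ∣ 2 * x) : d ∣ x := by
  obtain ⟨c, hc⟩ := hd
  have hcop : IsCoprime d 2 := ⟨1, -c, by rw [hc]; ring⟩
  exact hcop.dvd_of_dvd_mul_left h

lemma pair_ne {g : ℕ} {j K : Fin g} (h : j ≠ K) (β β' : Bool) : (j, β) ≠ (K, β') := by
  simp [Prod.ext_iff, h]

lemma fin_ne_of_val_ne {g : ℕ} {j K : Fin g} (h : (j : ℕ) ≠ (K : ℕ)) : j ≠ K :=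
  fun hh => h (congrArg Fin.val hh)

/-- clearing all the even junk when the anchor coordinate is `±1` -/
lemma clear_aux {g k : ℕ} (hk : k < g) (fuel : ℕ) :
    ∀ v : L g, Supp k v → v (⟨k, hk⟩, true) = 0 →
    (v (⟨k, hk⟩, false) = 1 ∨ v (⟨k, hk⟩, false) = -1) →
    (∀ q, q ≠ (⟨k, hk⟩, false) → Even (v q)) →
    (∀ q : Fin g × Bool, k + 1 + fuel ≤ (q.1 : ℕ) → v q = 0) →
    ReachA g k v (e (⟨k, hk⟩, false)) := by
  set K : Fin g := ⟨k, hk⟩ with hK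
  induction fuel with
  | zero =>
    intro v hsupp ht hpm hev hclean
    -- v = ± e (K, false)
    have hv : ∀ q : Fin g × Bool, q ≠ (K, false) → v q = 0 := by
      rintro ⟨i, ε⟩ hq
      rcases lt_trichotomy (i : ℕ) k with h | h | h
      · exact hsupp (i, ε) h
      · have hiK : i = K := Fin.ext (by simpa using h)
        subst hiK
        cases ε
        · exact absurd rfl hq
        · exact ht
      · exact hclean (i, ε) (by simpa using h)
    rcases hpm with h1 | h1
    · have : v = e (K, false) := by
        funext q
        by_cases hq : q = (K, false)
        · rw [hq, h1, e_apply_same]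
        · rw [hv q hq, e_apply_ne hq]
      rw [this]
      exact ReachA.refl _
    · -- v = - e (K,false) : two sign-fixing moves
      have hne : ((K, false) : Fin g × Bool) ≠ (K, true) := by simp
      have hKle : k ≤ (K : ℕ) := le_of_eq rfl
      have hc1 : Primitive (e (K, false) + e (K, true)) := primitive_e_add_e hne
      have hs1 : Supp k (e (K, false) + e (K, true)) :=
        supp_add (supp_e hKle _) (supp_e hKle _)
      have hw1 : omg (e (K, false) + e (K, true)) v = 1 := by
        rw [omg_add_left, omg_e_false, omg_e_true, ht, h1]; ring
      have step1 := reachA_move (e (K, false) + e (K, true)) hc1 hs1 1 v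
      set v1 := v + (2 * 1 * omg (e (K, false) + e (K, true)) v) • (e (K, false) + e (K, true))
        with hv1
      have h1f : v1 (K, false) = 1 := by
        rw [hv1, hw1, upd2_apply _ _ _ _ _ hne, if_pos rfl, h1]; ring
      have h1t : v1 (K, true) = 2 := by
        rw [hv1, hw1, upd2_apply _ _ _ _ _ hne, if_neg (by simp), if_pos rfl, ht]; ring
      have h1o : ∀ q, q ≠ (K, false) → q ≠ (K, true) → v1 q = v q := by
        intro q hq1 hq2
        rw [hv1, upd2_apply _ _ _ _ _ hne, if_neg hq1, if_neg hq2]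
      have hw2 : omg (e (K, true)) v1 = -1 := by rw [omg_e_true, h1f]
      have step2 := reachA_move (e (K, true)) (primitive_e _) (supp_e hKle _) 1 v1
      set v2 := v1 + (2 * 1 * omg (e (K, true)) v1) • e (K, true) with hv2
      have hfinal : v2 = e (K, false) := by
        funext q
        by_cases hq2 : q = (K, true)
        · rw [hq2, hv2, hw2, upd_apply, if_pos rfl, h1t, e_apply_ne hne.symm]; ring
        · rw [hv2, upd_apply, if_neg hq2]
          by_cases hq1 : q = (K, false)
          · rw [hq1, h1f, e_apply_same]
          · rw [h1o q hq1 hq2, hv q hq1, e_apply_ne hq1]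
      rw [← hfinal]
      exact step1.trans step2
  | succ fuel IH =>
    intro v hsupp ht hpm hev hclean
    by_cases hg : g ≤ k + 1 + fuel
    · exact IH v hsupp ht hpm hev (fun q hq => absurd (lt_of_lt_of_le q.1.isLt hg) (by omega))
    · push_neg at hg
      set t : ℕ := k + 1 + fuel with htdef
      set j : Fin g := ⟨t, hg⟩ with hj
      have hjk : k < (j : ℕ) := by simp [hj]; omega
      have hjK : j ≠ K := fin_ne_of_val_ne (by simp [hj, hK]; omega)
      have hjkle : k ≤ (j : ℕ) := le_of_lt hjk
      have hKle : k ≤ (K : ℕ) := le_of_eq rfl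
      set a := v (K, false) with ha
      have he2 : a * a = 1 := by rcases hpm with h | h <;> rw [h] <;> norm_num
      -- M1 & M2 : clear (j, false)
      obtain ⟨s1, hs1⟩ := hev (j, false) (pair_ne hjK _ _)
      have hne1 : ((j, false) : Fin g × Bool) ≠ (K, true) := pair_ne hjK _ _
      have hc1 : Primitive (e (j, false) + e (K, true)) := primitive_e_add_e hne1
      have hsc1 : Supp k (e (j, false) + e (K, true)) :=
        supp_add (supp_e hjkle _) (supp_e hKle _)
      set β := a * s1 with hβ
      have move1 := reachA_move _ hc1 hsc1 β v
      set ω₁ := omg (e (j, false) + e (K, true)) v with hω₁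
      have hω₁v : ω₁ = v (j, true) - a := by
        rw [hω₁, omg_add_left, omg_e_false, omg_e_true, ha]; ring
      set v1 := v + (2 * β * ω₁) • (e (j, false) + e (K, true)) with hv1
      have v1_jf : v1 (j, false) = v (j, false) + 2 * β * ω₁ := by
        rw [hv1, upd2_apply _ _ _ _ _ hne1, if_pos rfl]
      have v1_kt : v1 (K, true) = 2 * β * ω₁ := by
        rw [hv1, upd2_apply _ _ _ _ _ hne1, if_neg (pair_ne hjK.symm _ _), if_pos rfl, ht]
        ring
      have v1_o : ∀ q, q ≠ (j, false) → q ≠ (K, true) → v1 q = v q := by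
        intro q h1 h2; rw [hv1, upd2_apply _ _ _ _ _ hne1, if_neg h1, if_neg h2]
      have move2 := reachA_move (e (j, false)) (primitive_e _) (supp_e hjkle _) (-β) v1
      set ω₂ := omg (e (j, false)) v1 with hω₂
      have hω₂v : ω₂ = v (j, true) := by
        rw [hω₂, omg_e_false, v1_o _ (by simp) (pair_ne hjK _ _)]
      set v2 := v1 + (2 * (-β) * ω₂) • e (j, false) with hv2
      have v2_jf : v2 (j, false) = 0 := by
        rw [hv2, upd_apply, if_pos rfl, v1_jf, hω₂v, hω₁v, hβ, hs1]
        linear_combination (-2 * s1) * he2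
      have v2_o : ∀ q, q ≠ (j, false) → v2 q = v1 q := by
        intro q h1; rw [hv2, upd_apply, if_neg h1]
      have v2_kf : v2 (K, false) = a := by
        rw [v2_o _ (pair_ne hjK.symm _ _), v1_o _ (pair_ne hjK.symm _ _) (by simp), ← ha]
      have v2_kt : v2 (K, true) = 2 * β * ω₁ := by
        rw [v2_o _ (pair_ne hjK.symm _ _), v1_kt]
      have v2_jt : v2 (j, true) = v (j, true) := by
        rw [v2_o _ (by simp), v1_o _ (by simp) (pair_ne hjK _ _)]
      -- M3 : clear (K, true)
      have hω₃ : omg (e (K, true)) v2 = -a := by rw [omg_e_true, v2_kf]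
      set γ := a * β * ω₁ with hγ
      have move3 := reachA_move (e (K, true)) (primitive_e _) (supp_e hKle _) γ v2
      set v3 := v2 + (2 * γ * omg (e (K, true)) v2) • e (K, true) with hv3
      have v3_kt : v3 (K, true) = 0 := by
        rw [hv3, hω₃, upd_apply, if_pos rfl, v2_kt, hγ]
        linear_combination (-2 * β * ω₁) * he2
      have v3_o : ∀ q, q ≠ (K, true) → v3 q = v2 q := by
        intro q h1; rw [hv3, upd_apply, if_neg h1]
      have v3_kf : v3 (K, false) = a := by rw [v3_o _ (by simp), v2_kf]
      have v3_jf : v3 (j, false) = 0 := by rw [v3_o _ (pair_ne hjK _ _), v2_jf]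
      have v3_jt : v3 (j, true) = v (j, true) := by rw [v3_o _ (pair_ne hjK _ _), v2_jt]
      -- M4 : clear (j, true)
      obtain ⟨s2, hs2⟩ := hev (j, true) (pair_ne hjK _ _)
      have hne4 : ((j, true) : Fin g × Bool) ≠ (K, true) := pair_ne hjK _ _
      have hc4 : Primitive (e (j, true) + e (K, true)) := primitive_e_add_e hne4
      have hsc4 : Supp k (e (j, true) + e (K, true)) :=
        supp_add (supp_e hjkle _) (supp_e hKle _)
      have hω₄ : omg (e (j, true) + e (K, true)) v3 = -a := by
        rw [omg_add_left, omg_e_true, omg_e_true, v3_jf, v3_kf]; ring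
      set δ := a * s2 with hδ
      have move4 := reachA_move _ hc4 hsc4 δ v3
      set v4 := v3 + (2 * δ * omg (e (j, true) + e (K, true)) v3) • (e (j, true) + e (K, true))
        with hv4
      have v4_jt : v4 (j, true) = 0 := by
        rw [hv4, hω₄, upd2_apply _ _ _ _ _ hne4, if_pos rfl, v3_jt, hs2, hδ]
        linear_combination (-2 * s2) * he2
      have v4_kt : v4 (K, true) = -(s2 + s2) := by
        rw [hv4, hω₄, upd2_apply _ _ _ _ _ hne4, if_neg (pair_ne hjK.symm _ _), if_pos rfl,
          v3_kt, hδ]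
        linear_combination (-2 * s2) * he2
      have v4_o : ∀ q, q ≠ (j, true) → q ≠ (K, true) → v4 q = v3 q := by
        intro q h1 h2; rw [hv4, upd2_apply _ _ _ _ _ hne4, if_neg h1, if_neg h2]
      have v4_kf : v4 (K, false) = a := by
        rw [v4_o _ (pair_ne hjK.symm _ _) (by simp), v3_kf]
      -- M5 : clear (K, true) again
      have hω₅ : omg (e (K, true)) v4 = -a := by rw [omg_e_true, v4_kf]
      set γ₂ := -(a * s2) with hγ₂
      have move5 := reachA_move (e (K, true)) (primitive_e _) (supp_e hKle _) γ₂ v4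
      set v5 := v4 + (2 * γ₂ * omg (e (K, true)) v4) • e (K, true) with hv5
      have v5_kt : v5 (K, true) = 0 := by
        rw [hv5, hω₅, upd_apply, if_pos rfl, v4_kt, hγ₂]
        linear_combination (2 * s2) * he2
      have v5_o : ∀ q, q ≠ (K, true) → v5 q = v4 q := by
        intro q h1; rw [hv5, upd_apply, if_neg h1]
      have v5_kf : v5 (K, false) = a := by rw [v5_o _ (by simp), v4_kf]
      have v5_jf : v5 (j, false) = 0 := by
        rw [v5_o _ (pair_ne hjK _ _), v4_o _ (by simp) (pair_ne hjK _ _), v3_jf]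
      have v5_jt : v5 (j, true) = 0 := by
        rw [v5_o _ (pair_ne hjK _ _), v4_jt]
      have v5_far : ∀ q : Fin g × Bool, q ≠ (j, false) → q ≠ (j, true) → q ≠ (K, true) →
          v5 q = v q := by
        intro q h1 h2 h3
        rw [v5_o _ h3, v4_o _ h2 h3, v3_o _ h3, v2_o _ h1, v1_o _ h1 h3]
      -- apply IH
      have hIH := IH v5
        (fun p hp => by
          have hpj : p ≠ (j, false) := by rintro rfl; have h' : t < k := hp; omega
          have hpj' : p ≠ (j, true) := by rintro rfl; have h' : t < k := hp; omega
          have hpk : p ≠ (K, true) := by rintro rfl; have h' : k < k := hp; omega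
          rw [v5_far p hpj hpj' hpk]; exact hsupp p hp)
        v5_kt
        (by rw [v5_kf]; exact hpm)
        (fun q hq => by
          by_cases h1 : q = (j, false)
          · rw [h1, v5_jf]; exact Even.zero
          by_cases h2 : q = (j, true)
          · rw [h2, v5_jt]; exact Even.zero
          by_cases h3 : q = (K, true)
          · rw [h3, v5_kt]; exact Even.zero
          · rw [v5_far q h1 h2 h3]; exact hev q hq)
        (fun q hq => by
          by_cases h1 : q = (j, false)
          · rw [h1]; exact v5_jf
          by_cases h2 : q = (j, true)
          · rw [h2]; exact v5_jt
          by_cases h3 : q = (K, true)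
          · rw [h3]; exact v5_kt
          · rw [v5_far q h1 h2 h3]
            refine hclean q ?_
            rcases lt_or_ge (q.1 : ℕ) (k + 1 + fuel + 1) with hlt | hge
            · exfalso
              have hqt : (q.1 : ℕ) = t := by omega
              have hq1 : q.1 = j := Fin.ext (by simpa [hj] using hqt)
              obtain ⟨q1, qb⟩ := q
              simp only at hq1
              subst hq1
              cases qb
              · exact h1 rfl
              · exact h2 rfl
            · exact hge)
      exact move1.trans (move2.trans (move3.trans (move4.trans (move5.trans hIH))))


lemma ReachA.primitive {g k : ℕ} {v w : L g} (h : ReachA g k v w) (hv : Primitive v) :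
    Primitive w := by
  obtain ⟨n, -, rfl⟩ := h
  exact primitive_map n hv

lemma reduce {g k : ℕ} (hk : k < g) (n : ℕ) :
    ∀ w : L g, (w (⟨k, hk⟩, false)).natAbs = n → Primitive w → Supp k w →
    Odd (w (⟨k, hk⟩, false)) → w (⟨k, hk⟩, true) = 0 →
    (∀ q, q ≠ ((⟨k, hk⟩ : Fin g), false) → Even (w q)) →
    ReachA g k w (e (⟨k, hk⟩, false)) := by
  set K : Fin g := ⟨k, hk⟩ with hKdef
  induction n using Nat.strong_induction_on with
  | _ n IH =>
    intro w hn hprim hsupp hodd ht hev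
    have hKle : k ≤ (K : ℕ) := le_of_eq rfl
    by_cases hpm : w (K, false) = 1 ∨ w (K, false) = -1
    · exact clear_aux hk g w hsupp ht hpm hev
        (fun q hq => absurd q.1.isLt (by omega))
    · set a := w (K, false) with ha
      have ha0 : a ≠ 0 := by
        have := Int.odd_iff.mp hodd; omega
      have hbad : ¬ ∀ q, a ∣ w q := fun hall => by
        rcases primitive_unit_of_dvd hprim ha0 hall with h | h
        · exact hpm (Or.inl h)
        · exact hpm (Or.inr h)
      push_neg at hbad
      obtain ⟨⟨j, ε⟩, hq₀⟩ := hbad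
      have hjk : k < (j : ℕ) := by
        rcases lt_trichotomy ((j : ℕ)) k with h | h | h
        · exact absurd (hsupp (j, ε) h ▸ dvd_zero a) hq₀
        · exfalso
          have hjK : j = K := Fin.ext (by simpa using h)
          subst hjK
          cases ε
          · exact hq₀ dvd_rfl
          · exact hq₀ (ht ▸ dvd_zero a)
        · exact h
      have hjK : j ≠ K := fin_ne_of_val_ne (by show (j : ℕ) ≠ k; omega)
      have hjkle : k ≤ (j : ℕ) := le_of_lt hjk
      -- move 1 : fold b_j into the (K,true) slot
      have hne1 : ((j, false) : Fin g × Bool) ≠ (K, true) := pair_ne hjK _ _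
      have move1 := reachA_move _ (primitive_e_add_e hne1)
        (supp_add (supp_e hjkle _) (supp_e hKle _)) 1 w
      set ω₁ := omg (e (j, false) + e (K, true)) w with hω₁
      have hω₁v : ω₁ = w (j, true) - a := by
        rw [hω₁, omg_add_left, omg_e_false, omg_e_true, ← ha]; ring
      set w1 := w + (2 * 1 * ω₁) • (e (j, false) + e (K, true)) with hw1
      have w1_jf : w1 (j, false) = w (j, false) + 2 * 1 * ω₁ := by
        rw [hw1, upd2_apply _ _ _ _ _ hne1, if_pos rfl]
      have w1_kt : w1 (K, true) = 2 * 1 * ω₁ := by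
        rw [hw1, upd2_apply _ _ _ _ _ hne1, if_neg (pair_ne hjK.symm _ _), if_pos rfl, ht]
        ring
      have w1_o : ∀ q, q ≠ (j, false) → q ≠ (K, true) → w1 q = w q := by
        intro q h1 h2; rw [hw1, upd2_apply _ _ _ _ _ hne1, if_neg h1, if_neg h2]
      have w1_kf : w1 (K, false) = a := by
        rw [w1_o _ (pair_ne hjK.symm _ _) (by simp), ← ha]
      have w1_jt : w1 (j, true) = w (j, true) := by
        rw [w1_o _ (by simp) (pair_ne hjK _ _)]
      -- euclid 1
      obtain ⟨w2, reach2, w2_kt, w2_dva, w2_dvb, w2_o⟩ := euclid k K hKle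
        ((w1 (K, true)).natAbs) w1 rfl (by rw [w1_kf]; exact hodd)
        (by rw [w1_kt]; exact ⟨ω₁, by ring⟩)
      set d1 := w2 (K, false) with hd1
      have hd1a : d1 ∣ a := by rw [hd1, ← w1_kf]; exact w2_dva
      have hd1odd : Odd d1 := odd_of_dvd hd1a hodd
      have hd1ω : d1 ∣ ω₁ := by
        apply dvd_of_dvd_two_mul hd1odd
        have : w1 (K, true) = 2 * ω₁ := by rw [w1_kt]; ring
        rw [← this]; exact w2_dvb
      have hd1bj : d1 ∣ w (j, true) := by
        have : w (j, true) = ω₁ + a := by rw [hω₁v]; ring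
        rw [this]; exact dvd_add hd1ω hd1a
      have w2_jf : w2 (j, false) = w (j, false) + 2 * 1 * ω₁ := by
        rw [w2_o _ (pair_ne hjK _ _) (pair_ne hjK _ _), w1_jf]
      have w2_jt : w2 (j, true) = w (j, true) := by
        rw [w2_o _ (pair_ne hjK _ _) (pair_ne hjK _ _), w1_jt]
      -- move 2 : fold a_j
      have hne2 : ((j, true) : Fin g × Bool) ≠ (K, true) := pair_ne hjK _ _
      have move3 := reachA_move _ (primitive_e_add_e hne2)
        (supp_add (supp_e hjkle _) (supp_e hKle _)) 1 w2
      set ω₂ := omg (e (j, true) + e (K, true)) w2 with hω₂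
      have hω₂v : ω₂ = -(w2 (j, false)) - d1 := by
        rw [hω₂, omg_add_left, omg_e_true, omg_e_true, hd1]; ring
      set w3 := w2 + (2 * 1 * ω₂) • (e (j, true) + e (K, true)) with hw3
      have w3_jt : w3 (j, true) = w (j, true) + 2 * 1 * ω₂ := by
        rw [hw3, upd2_apply _ _ _ _ _ hne2, if_pos rfl, w2_jt]
      have w3_kt : w3 (K, true) = 2 * 1 * ω₂ := by
        rw [hw3, upd2_apply _ _ _ _ _ hne2, if_neg (pair_ne hjK.symm _ _), if_pos rfl, w2_kt]
        ring
      have w3_o : ∀ q, q ≠ (j, true) → q ≠ (K, true) → w3 q = w2 q := by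
        intro q h1 h2; rw [hw3, upd2_apply _ _ _ _ _ hne2, if_neg h1, if_neg h2]
      have w3_kf : w3 (K, false) = d1 := by
        rw [w3_o _ (pair_ne hjK.symm _ _) (by simp), hd1]
      have w3_jf : w3 (j, false) = w2 (j, false) := by
        rw [w3_o _ (by simp) (pair_ne hjK _ _)]
      -- euclid 2
      obtain ⟨w4, reach4, w4_kt, w4_dva, w4_dvb, w4_o⟩ := euclid k K hKle
        ((w3 (K, true)).natAbs) w3 rfl (by rw [w3_kf]; exact hd1odd)
        (by rw [w3_kt]; exact ⟨ω₂, by ring⟩)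
      set d2 := w4 (K, false) with hd2
      have hd2d1 : d2 ∣ d1 := by rw [hd2, ← w3_kf]; exact w4_dva
      have hd2odd : Odd d2 := odd_of_dvd hd2d1 hd1odd
      have hd2ω : d2 ∣ ω₂ := by
        apply dvd_of_dvd_two_mul hd2odd
        have : w3 (K, true) = 2 * ω₂ := by rw [w3_kt]; ring
        rw [← this]; exact w4_dvb
      have hd2a : d2 ∣ a := dvd_trans hd2d1 hd1a
      have hd2w2jf : d2 ∣ w2 (j, false) := by
        have : w2 (j, false) = -ω₂ - d1 := by rw [hω₂v]; ring
        rw [this]; exact dvd_sub (dvd_neg.mpr hd2ω) hd2d1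
      have hd2aj : d2 ∣ w (j, false) := by
        have : w (j, false) = w2 (j, false) - 2 * 1 * ω₁ := by rw [w2_jf]; ring
        rw [this]
        exact dvd_sub hd2w2jf ((dvd_trans hd2d1 hd1ω).mul_left _)
      have hd2bj : d2 ∣ w (j, true) := dvd_trans hd2d1 hd1bj
      -- the anchor strictly decreased
      have hd20 : d2 ≠ 0 := by have := Int.odd_iff.mp hd2odd; omega
      have hlt : d2.natAbs < n := by
        have h1 : d2.natAbs ∣ a.natAbs := Int.natAbs_dvd_natAbs.mpr hd2a
        have h2 : d2.natAbs ≤ a.natAbs := Nat.le_of_dvd (by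
          have : a.natAbs ≠ 0 := fun hh => ha0 (Int.natAbs_eq_zero.mp hh)
          omega) h1
      -- rule out equality
        rcases lt_or_eq_of_le h2 with h | h
        · rw [← hn]; exact h
        · exfalso
          have had2 : a ∣ d2 := Int.natAbs_dvd_natAbs.mp (h ▸ dvd_rfl)
          cases ε
          · exact hq₀ (dvd_trans had2 hd2aj)
          · exact hq₀ (dvd_trans had2 hd2bj)
      -- invariants of w4 and recursion
      have reachw4 : ReachA g k w w4 :=
        move1.trans (reach2.trans (move3.trans reach4))
      have w4_jf : w4 (j, false) = w2 (j, false) := by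
        rw [w4_o _ (pair_ne hjK _ _) (pair_ne hjK _ _), w3_jf]
      have w4_jt : w4 (j, true) = w (j, true) + 2 * 1 * ω₂ := by
        rw [w4_o _ (pair_ne hjK _ _) (pair_ne hjK _ _), w3_jt]
      have w4_far : ∀ q : Fin g × Bool, q ≠ (j, false) → q ≠ (j, true) →
          q ≠ (K, false) → q ≠ (K, true) → w4 q = w q := by
        intro q h1 h2 h3 h4
        rw [w4_o _ h3 h4, w3_o _ h2 h4, w2_o _ h3 h4, w1_o _ h1 h4]
      have hrec := IH d2.natAbs hlt w4 rfl (reachw4.primitive hprim)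
        (fun p hp => by
          have hpj : p ≠ (j, false) := by rintro rfl; have h' : (j : ℕ) < k := hp; omega
          have hpj' : p ≠ (j, true) := by rintro rfl; have h' : (j : ℕ) < k := hp; omega
          have hpk : p ≠ (K, false) := by rintro rfl; have h' : k < k := hp; omega
          have hpk' : p ≠ (K, true) := by rintro rfl; have h' : k < k := hp; omega
          rw [w4_far p hpj hpj' hpk hpk']; exact hsupp p hp)
        hd2odd w4_kt
        (fun q hq => by
          by_cases h1 : q = (j, false)
          · rw [h1, w4_jf, w2_jf]
            obtain ⟨s, hs⟩ := hev (j, false) (pair_ne hjK _ _)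
            exact ⟨s + ω₁, by rw [hs]; ring⟩
          by_cases h2 : q = (j, true)
          · rw [h2, w4_jt]
            obtain ⟨s, hs⟩ := hev (j, true) (pair_ne hjK _ _)
            exact ⟨s + ω₂, by rw [hs]; ring⟩
          by_cases h4 : q = (K, true)
          · rw [h4, w4_kt]; exact Even.zero
          · rw [w4_far q h1 h2 hq h4]; exact hev q hq)
      exact reachw4.trans hrec

lemma transitivity {g k : ℕ} (hk : k < g) (v : L g) (hprim : Primitive v)
    (hsupp : Supp k v) (hodd : Odd (v (⟨k, hk⟩, false)))
    (hev : ∀ q, q ≠ ((⟨k, hk⟩ : Fin g), false) → Even (v q)) :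
    ReachA g k v (e (⟨k, hk⟩, false)) := by
  set K : Fin g := ⟨k, hk⟩ with hKdef
  have hKle : k ≤ (K : ℕ) := le_of_eq rfl
  obtain ⟨w, hr, hwt, hda, hdb, hwo⟩ := euclid k K hKle ((v (K, true)).natAbs) v rfl hodd
    (hev (K, true) (by simp))
  refine hr.trans (reduce hk ((w (K, false)).natAbs) w rfl (hr.primitive hprim) ?_
    (odd_of_dvd hda hodd) hwt ?_)
  · intro p hp
    have hp1 : p ≠ (K, false) := by rintro rfl; have h' : k < k := hp; omega
    have hp2 : p ≠ (K, true) := by rintro rfl; have h' : k < k := hp; omega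
    rw [hwo p hp1 hp2]; exact hsupp p hp
  · intro q hq
    by_cases h2 : q = (K, true)
    · rw [h2, hwt]; exact Even.zero
    · rw [hwo q hq h2]; exact hev q hq

lemma omg_eKf {g : ℕ} (c : L g) (K : Fin g) : omg c (e (K, false)) = - c (K, true) := by
  rw [omg_anti, omg_e_false]

lemma partner {g k : ℕ} (hk : k < g) (fuel : ℕ) :
    ∀ w : L g, Supp k w → w (⟨k, hk⟩, true) = 1 →
    (∀ q, q ≠ ((⟨k, hk⟩ : Fin g), true) → Even (w q)) →
    (∀ q : Fin g × Bool, k + 1 + fuel ≤ (q.1 : ℕ) → w q = 0) →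
    ReachB g k (e (⟨k, hk⟩, false)) w (e (⟨k, hk⟩, true)) := by
  set K : Fin g := ⟨k, hk⟩ with hKdef
  have hKle : k ≤ (K : ℕ) := le_of_eq rfl
  induction fuel with
  | zero =>
    intro w hsupp ht hev hclean
    obtain ⟨s, hs⟩ := hev (K, false) (by simp)
    have hx : omg (e (K, false)) (e (K, false)) = 0 := omg_self _
    have hω : omg (e (K, false)) w = 1 := by rw [omg_e_false, ht]
    have move := reachB_move (e (K, false)) (primitive_e _) (supp_e hKle _) hx (-s) w
    set w1 := w + (2 * (-s) * omg (e (K, false)) w) • e (K, false) with hw1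
    have hfinal : w1 = e (K, true) := by
      funext q
      by_cases h1 : q = (K, false)
      · rw [h1, hw1, hω, upd_apply, if_pos rfl, hs, e_apply_ne (by simp : ((K, false) : Fin g × Bool) ≠ (K, true))]
        ring
      · rw [hw1, upd_apply, if_neg h1]
        by_cases h2 : q = (K, true)
        · rw [h2, ht, e_apply_same]
        · rw [e_apply_ne h2]
          obtain ⟨i, ε⟩ := q
          rcases lt_trichotomy ((i : ℕ)) k with h | h | h
          · exact hsupp (i, ε) h
          · exfalso
            have hiK : i = K := Fin.ext (by simpa using h)
            subst hiK
            cases ε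
            · exact h1 rfl
            · exact h2 rfl
          · exact hclean (i, ε) (by simpa using h)
    rw [← hfinal]
    exact move
  | succ fuel IH =>
    intro w hsupp ht hev hclean
    by_cases hg : g ≤ k + 1 + fuel
    · exact IH w hsupp ht hev (fun q hq => absurd (lt_of_lt_of_le q.1.isLt hg) (by omega))
    · push_neg at hg
      set t : ℕ := k + 1 + fuel with htdef
      set j : Fin g := ⟨t, hg⟩ with hj
      have hjk : k < (j : ℕ) := by simp [hj]; omega
      have hjK : j ≠ K := fin_ne_of_val_ne (by simp [hj, hKdef]; omega)
      have hjkle : k ≤ (j : ℕ) := le_of_lt hjk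
      -- N1 & N2 : clear (j, false)
      obtain ⟨s1, hs1⟩ := hev (j, false) (pair_ne hjK _ _)
      have hne1 : ((j, false) : Fin g × Bool) ≠ (K, false) := pair_ne hjK _ _
      have hx1 : omg (e (j, false) + e (K, false)) (e (K, false)) = 0 := by
        rw [omg_eKf, Pi.add_apply, e_apply_ne (pair_ne hjK.symm _ _),
          e_apply_ne (by simp : ((K, true) : Fin g × Bool) ≠ (K, false))]
        ring
      have move1 := reachB_move _ (primitive_e_add_e hne1)
        (supp_add (supp_e hjkle _) (supp_e hKle _)) hx1 (-s1) w
      set ω₁ := omg (e (j, false) + e (K, false)) w with hω₁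
      have hω₁v : ω₁ = w (j, true) + 1 := by
        rw [hω₁, omg_add_left, omg_e_false, omg_e_false, ht]
      set w1 := w + (2 * (-s1) * ω₁) • (e (j, false) + e (K, false)) with hw1
      have w1_jf : w1 (j, false) = w (j, false) + 2 * (-s1) * ω₁ := by
        rw [hw1, upd2_apply _ _ _ _ _ hne1, if_pos rfl]
      have w1_kf : w1 (K, false) = w (K, false) + 2 * (-s1) * ω₁ := by
        rw [hw1, upd2_apply _ _ _ _ _ hne1, if_neg (pair_ne hjK.symm _ _), if_pos rfl]
      have w1_o : ∀ q, q ≠ (j, false) → q ≠ (K, false) → w1 q = w q := by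
        intro q h1 h2; rw [hw1, upd2_apply _ _ _ _ _ hne1, if_neg h1, if_neg h2]
      have w1_jt : w1 (j, true) = w (j, true) := by
        rw [w1_o _ (by simp) (pair_ne hjK _ _)]
      have w1_kt : w1 (K, true) = 1 := by
        rw [w1_o _ (pair_ne hjK.symm _ _) (by simp), ht]
      have move2 := reachB_move (e (j, false)) (primitive_e _) (supp_e hjkle _)
        (by rw [omg_eKf, e_apply_ne (pair_ne hjK.symm _ _)]; ring) s1 w1
      set ω₂ := omg (e (j, false)) w1 with hω₂
      have hω₂v : ω₂ = w (j, true) := by rw [hω₂, omg_e_false, w1_jt]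
      set w2 := w1 + (2 * s1 * ω₂) • e (j, false) with hw2
      have w2_jf : w2 (j, false) = 0 := by
        rw [hw2, upd_apply, if_pos rfl, w1_jf, hω₂v, hω₁v, hs1]
        ring
      have w2_o : ∀ q, q ≠ (j, false) → w2 q = w1 q := by
        intro q h1; rw [hw2, upd_apply, if_neg h1]
      have w2_kt : w2 (K, true) = 1 := by rw [w2_o _ (pair_ne hjK.symm _ _), w1_kt]
      have w2_jt : w2 (j, true) = w (j, true) := by rw [w2_o _ (by simp), w1_jt]
      -- N3 : clear (j, true)
      obtain ⟨s2, hs2⟩ := hev (j, true) (pair_ne hjK _ _)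
      have hne3 : ((j, true) : Fin g × Bool) ≠ (K, false) := pair_ne hjK _ _
      have hx3 : omg (e (j, true) + e (K, false)) (e (K, false)) = 0 := by
        rw [omg_eKf, Pi.add_apply, e_apply_ne (pair_ne hjK.symm _ _),
          e_apply_ne (by simp : ((K, true) : Fin g × Bool) ≠ (K, false))]
        ring
      have move3 := reachB_move _ (primitive_e_add_e hne3)
        (supp_add (supp_e hjkle _) (supp_e hKle _)) hx3 (-s2) w2
      set ω₃ := omg (e (j, true) + e (K, false)) w2 with hω₃
      have hω₃v : ω₃ = 1 := by
        rw [hω₃, omg_add_left, omg_e_true, omg_e_false, w2_jf, w2_kt]; ring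
      set w3 := w2 + (2 * (-s2) * ω₃) • (e (j, true) + e (K, false)) with hw3
      have w3_jt : w3 (j, true) = 0 := by
        rw [hw3, hω₃v, upd2_apply _ _ _ _ _ hne3, if_pos rfl, w2_jt, hs2]
        ring
      have w3_o : ∀ q, q ≠ (j, true) → q ≠ (K, false) → w3 q = w2 q := by
        intro q h1 h2; rw [hw3, upd2_apply _ _ _ _ _ hne3, if_neg h1, if_neg h2]
      have w3_jf : w3 (j, false) = 0 := by
        rw [w3_o _ (by simp) (pair_ne hjK _ _), w2_jf]
      have w3_kt : w3 (K, true) = 1 := by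
        rw [w3_o _ (pair_ne hjK.symm _ _) (by simp), w2_kt]
      have w2_kf : w2 (K, false) = w (K, false) + 2 * (-s1) * ω₁ := by
        rw [w2_o _ (pair_ne hjK.symm _ _), w1_kf]
      have w3_kf : w3 (K, false) = w (K, false) + 2 * (-s1) * ω₁ + 2 * (-s2) * ω₃ := by
        rw [hw3, upd2_apply _ _ _ _ _ hne3, if_neg (pair_ne hjK.symm _ _), if_pos rfl, w2_kf]
      have w3_far : ∀ q : Fin g × Bool, q ≠ (j, false) → q ≠ (j, true) → q ≠ (K, false) →
          w3 q = w q := by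
        intro q h1 h2 h3
        rw [w3_o _ h2 h3, w2_o _ h1, w1_o _ h1 h3]
      -- apply IH
      have hIH := IH w3
        (fun p hp => by
          have hpj : p ≠ (j, false) := by rintro rfl; have h' : t < k := hp; omega
          have hpj' : p ≠ (j, true) := by rintro rfl; have h' : t < k := hp; omega
          have hpk : p ≠ (K, false) := by rintro rfl; have h' : k < k := hp; omega
          rw [w3_far p hpj hpj' hpk]; exact hsupp p hp)
        w3_kt
        (fun q hq => by
          by_cases h1 : q = (j, false)
          · rw [h1, w3_jf]; exact Even.zero
          by_cases h2 : q = (j, true)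
          · rw [h2, w3_jt]; exact Even.zero
          by_cases h3 : q = (K, false)
          · rw [h3, w3_kf]
            obtain ⟨s0, hs0⟩ := hev (K, false) (by simp)
            exact ⟨s0 - s1 * ω₁ - s2 * ω₃, by rw [hs0]; ring⟩
          · rw [w3_far q h1 h2 h3]; exact hev q hq)
        (fun q hq => by
          by_cases h1 : q = (j, false)
          · rw [h1]; exact w3_jf
          by_cases h2 : q = (j, true)
          · rw [h2]; exact w3_jt
          by_cases h3 : q = (K, false)
          · exfalso
            rw [h3] at hq
            have : k + 1 + fuel ≤ k := hq
            omega
          · rw [w3_far q h1 h2 h3]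
            refine hclean q ?_
            rcases lt_or_ge (q.1 : ℕ) (k + 1 + fuel + 1) with hlt | hge
            · exfalso
              have hqt : (q.1 : ℕ) = t := by omega
              have hq1 : q.1 = j := Fin.ext (by simpa [hj] using hqt)
              obtain ⟨q1, qb⟩ := q
              simp only at hq1
              subst hq1
              cases qb
              · exact h1 rfl
              · exact h2 rfl
            · exact hge)
      exact move1.trans (move2.trans (move3.trans hIH))

lemma e_eq_single {g : ℕ} (p : Fin g × Bool) : e p = Pi.single p (1 : ℤ) := by
  funext q
  rw [Pi.single_apply]
  rfl

lemma eq_one_of_fixes {g : ℕ} (φ : L g ≃ₗ[ℤ] L g) (h : ∀ p, φ (e p) = e p) :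
    φ = (1 : L g ≃ₗ[ℤ] L g) := by
  apply LinearEquiv.ext
  intro v
  have hv : ∑ p : Fin g × Bool, v p • e p = v := by
    have h1 : ∀ p : Fin g × Bool, v p • e p = Pi.single p (v p) := by
      intro p
      rw [e_eq_single, ← Pi.single_smul, smul_eq_mul, mul_one]
    rw [Finset.sum_congr rfl (fun p _ => h1 p)]
    exact Finset.univ_sum_single v
  show φ v = v
  conv_lhs => rw [← hv]
  rw [map_sum]
  simp_rw [map_smul, h]
  exact hv

lemma ker_parity {g : ℕ} {φ : L g ≃ₗ[ℤ] L g} (hker : φ ∈ (redHom g).ker)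
    (p q : Fin g × Bool) : ((φ (e q) p : ℤ) : ZMod 2) = if p = q then 1 else 0 := by
  have h := MonoidHom.mem_ker.mp hker
  calc ((φ (e q) p : ℤ) : ZMod 2) = redHom g φ p q := (redHom_apply_e φ p q).symm
  _ = (1 : Matrix (Fin g × Bool) (Fin g × Bool) (ZMod 2)) p q := by rw [h]
  _ = if p = q then 1 else 0 := Matrix.one_apply

lemma ker_odd {g : ℕ} {φ : L g ≃ₗ[ℤ] L g} (hker : φ ∈ (redHom g).ker)
    (q : Fin g × Bool) : Odd (φ (e q) q) := by
  have h := ker_parity hker q q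
  rw [if_pos rfl] at h
  have h2 : ((φ (e q) q - 1 : ℤ) : ZMod 2) = 0 := by push_cast; rw [h]; ring
  obtain ⟨c, hc⟩ := (ZMod.intCast_zmod_eq_zero_iff_dvd _ 2).mp h2
  exact ⟨c, by omega⟩

lemma ker_even {g : ℕ} {φ : L g ≃ₗ[ℤ] L g} (hker : φ ∈ (redHom g).ker)
    {p q : Fin g × Bool} (hpq : p ≠ q) : Even (φ (e q) p) := by
  have h := ker_parity hker p q
  rw [if_neg hpq] at h
  obtain ⟨c, hc⟩ := (ZMod.intCast_zmod_eq_zero_iff_dvd _ 2).mp h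
  exact ⟨c, by omega⟩

lemma mem_Sp_iff {g : ℕ} {φ : L g ≃ₗ[ℤ] L g} :
    φ ∈ Sp g ↔ ∀ v w : L g, omg (φ v) (φ w) = omg v w := Iff.rfl

lemma fixed_supp {g k : ℕ} {φ : L g ≃ₗ[ℤ] L g} (hSp : φ ∈ Sp g)
    (hfix : ∀ p : Fin g × Bool, (p.1 : ℕ) < k → φ (e p) = e p) (r : Fin g × Bool) :
    ∀ p : Fin g × Bool, (p.1 : ℕ) < k → (φ (e r)) p = e r p := by
  rintro ⟨i, ε⟩ hp
  have hi : (((i, false) : Fin g × Bool).1 : ℕ) < k := hp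
  have hi' : (((i, true) : Fin g × Bool).1 : ℕ) < k := hp
  cases ε
  · -- use omg (e (i,true)) · = - ·(i,false)
    have h1 : omg (e (i, true)) (φ (e r)) = omg (e (i, true)) (e r) := by
      conv_lhs => rw [← hfix (i, true) hi']
      exact mem_Sp_iff.mp hSp (e (i, true)) (e r)
    rw [omg_e_true, omg_e_true] at h1
    omega
  · have h1 : omg (e (i, false)) (φ (e r)) = omg (e (i, false)) (e r) := by
      conv_lhs => rw [← hfix (i, false) hi]
      exact mem_Sp_iff.mp hSp (e (i, false)) (e r)
    rw [omg_e_false, omg_e_false] at h1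
    exact h1

lemma main_aux {g : ℕ} (fuel : ℕ) : ∀ (k : ℕ), g ≤ k + fuel →
    ∀ φ ∈ SpTwo g, (∀ p : Fin g × Bool, (p.1 : ℕ) < k → φ (e p) = e p) →
    φ ∈ Subgroup.closure (genSet g) := by
  induction fuel with
  | zero =>
    intro k hg φ hφ hfix
    have : φ = 1 := eq_one_of_fixes φ (fun p => hfix p (lt_of_lt_of_le p.1.isLt (by omega)))
    rw [this]
    exact one_mem _
  | succ fuel IH =>
    intro k hg φ hφ hfix
    by_cases hkg : g ≤ k
    · exact IH k (by omega) φ hφ hfix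
    · push_neg at hkg
      set K : Fin g := ⟨k, hkg⟩ with hKdef
      obtain ⟨hSp, hker⟩ := Subgroup.mem_inf.mp hφ
      -- step 1 : fix x_k
      set v := φ (e (K, false)) with hv
      have hvsupp : Supp k v := by
        intro p hp
        rw [hv, fixed_supp hSp hfix (K, false) p hp]
        exact e_apply_ne (by rintro rfl; have h' : k < k := hp; omega)
      have hvodd : Odd (v (K, false)) := ker_odd hker (K, false)
      have hvev : ∀ q, q ≠ ((K : Fin g), false) → Even (v q) :=
        fun q hq => ker_even hker hq
      have hvprim : Primitive v := primitive_map φ (primitive_e _)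
      obtain ⟨n₁, hn₁, hn₁v⟩ := transitivity hkg v hvprim hvsupp hvodd hvev
      set φ₂ := n₁ * φ with hφ₂
      have hφ₂mem : φ₂ ∈ SpTwo g := mul_mem (Nk_le_SpTwo hn₁) hφ
      obtain ⟨hSp₂, hker₂⟩ := Subgroup.mem_inf.mp hφ₂mem
      have hφ₂fix : ∀ p : Fin g × Bool, (p.1 : ℕ) < k → φ₂ (e p) = e p := by
        intro p hp
        show n₁ (φ (e p)) = e p
        rw [hfix p hp]
        exact Nk_fixes hn₁ p hp
      have hφ₂x : φ₂ (e (K, false)) = e (K, false) := by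
        show n₁ (φ (e (K, false))) = e (K, false)
        rw [← hv]
        exact hn₁v
      -- step 2 : fix y_k
      set w := φ₂ (e (K, true)) with hw
      have hwsupp : Supp k w := by
        intro p hp
        rw [hw, fixed_supp hSp₂ hφ₂fix (K, true) p hp]
        exact e_apply_ne (by rintro rfl; have h' : k < k := hp; omega)
      have hwkt : w (K, true) = 1 := by
        have h1 : omg (e (K, false)) w = omg (e (K, false)) (e (K, true)) := by
          conv_lhs => rw [← hφ₂x]
          exact mem_Sp_iff.mp hSp₂ (e (K, false)) (e (K, true))
        rw [omg_e_false, omg_e_false, e_apply_same] at h1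
        exact h1
      have hwev : ∀ q, q ≠ ((K : Fin g), true) → Even (w q) :=
        fun q hq => ker_even hker₂ hq
      obtain ⟨n₂, hn₂, hn₂w, hn₂x⟩ := partner hkg g w hwsupp hwkt hwev
        (fun q hq => absurd q.1.isLt (by omega))
      set φ₃ := n₂ * φ₂ with hφ₃
      have hφ₃mem : φ₃ ∈ SpTwo g := mul_mem (Nk_le_SpTwo hn₂) hφ₂mem
      have hφ₃fix : ∀ p : Fin g × Bool, (p.1 : ℕ) < k + 1 → φ₃ (e p) = e p := by
        rintro ⟨i, ε⟩ hp
        rcases lt_or_ge ((i : ℕ)) k with h | h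
        · show n₂ (φ₂ (e (i, ε))) = e (i, ε)
          rw [hφ₂fix (i, ε) h]
          exact Nk_fixes hn₂ (i, ε) h
        · have hik : (i : ℕ) = k := by
            have : (i : ℕ) < k + 1 := hp
            omega
          have hiK : i = K := Fin.ext (by simpa using hik)
          subst hiK
          cases ε
          · show n₂ (φ₂ (e (K, false))) = e (K, false)
            rw [hφ₂x]
            exact hn₂x
          · show n₂ (φ₂ (e (K, true))) = e (K, true)
            rw [← hw]
            exact hn₂w
      have hrec : φ₃ ∈ Subgroup.closure (genSet g) :=
        IH (k + 1) (by omega) φ₃ hφ₃mem hφ₃fix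
      have hid : φ = n₁⁻¹ * (n₂⁻¹ * φ₃) := by
        rw [hφ₃, hφ₂]
        group
      rw [hid]
      exact mul_mem (inv_mem (Nk_le_closure hn₁))
        (mul_mem (inv_mem (Nk_le_closure hn₂)) hrec)

/-- (Johnson) For `g ≥ 3`, `Sp^{(2)}(2g)` is generated by the square
transvections `T_a²` over all primitive `a ∈ ℤ^{2g}`. -/
theorem statement3 (g : ℕ) (hg : 3 ≤ g) :
    SpTwo g =
      Subgroup.closure {φ : L g ≃ₗ[ℤ] L g | ∃ a : L g, Primitive a ∧ φ = (T a) ^ 2} := by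
  apply le_antisymm
  · intro φ hφ
    exact main_aux g 0 (by omega) φ hφ (fun p hp => absurd hp (Nat.not_lt_zero _))
  · exact closure_le_SpTwo

end Paper
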